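/- Let A, B be n×n complex matrices such that |B + γ·A| ≥ |B| for all γ ∈ ℂ (i.e., |B + γ·A| − |B| is positive semidefinite for every γ ∈ ℂ). Then: (a) tr(BᴴA) = 0; and (b) for every p ∈ [1, ∞), B is Birkhoff–James orthogonal to A with respect to the Schatten p-norm, i.e. ‖B‖ₚ ≤ ‖B + γ·A‖ₚ for all γ ∈ ℂ. -/

import Mathlib

open Matrix ComplexOrder


-- tangent line inequality for rpow
lemma tangent_rpow {s t p : ℝ} (hs : 0 ≤ s) (ht : 0 ≤ t) (hp : 1 ≤ p) :
    s ^ p + p * s ^ (p - 1) * (t - s) ≤ t ^ p := by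
  rcases hs.eq_or_lt with rfl | hs0
  · rcases hp.eq_or_lt with rfl | hp1
    · simp [Real.rpow_one]
    · rw [Real.zero_rpow (by positivity), Real.zero_rpow (by linarith : p - 1 ≠ 0)]
      simpa using Real.rpow_nonneg ht p
  · have key := one_add_mul_self_le_rpow_one_add
      (s := t / s - 1) (by linarith [div_nonneg ht hs0.le]) hp
    rw [add_sub_cancel, Real.div_rpow ht hs0.le] at key
    have hsp : (0:ℝ) < s ^ p := Real.rpow_pos_of_pos hs0 p
    have hspow : s ^ (p - 1) = s ^ p / s := by
      rw [Real.rpow_sub hs0, Real.rpow_one]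
    have := mul_le_mul_of_nonneg_right key hsp.le
    rw [div_mul_cancel₀ _ hsp.ne'] at this
    calc s ^ p + p * s ^ (p - 1) * (t - s)
        = (1 + p * (t / s - 1)) * s ^ p := by
          rw [hspow]; field_simp
      _ ≤ t ^ p := this

lemma psd_diag_re_nonneg {n : ℕ} {M : Matrix (Fin n) (Fin n) ℂ} (hM : M.PosSemidef)
    (i : Fin n) : 0 ≤ (M i i).re := by
  have h := hM.re_dotProduct_nonneg (Pi.single i 1)
  simpa [dotProduct, Pi.single_apply, mulVec, Finset.sum_ite_eq, Finset.sum_ite_eq'] using h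

lemma psd_trace_re_nonneg {n : ℕ} {M : Matrix (Fin n) (Fin n) ℂ} (hM : M.PosSemidef) :
    0 ≤ M.trace.re := by
  rw [Matrix.trace, Complex.re_sum]
  exact Finset.sum_nonneg fun i _ => psd_diag_re_nonneg hM i

lemma psd_trace_mul_re_nonneg {n : ℕ} {M N : Matrix (Fin n) (Fin n) ℂ}
    (hM : M.PosSemidef) (hN : N.PosSemidef) : 0 ≤ ((M * N).trace).re := by
  obtain ⟨C, rfl⟩ : ∃ C : Matrix (Fin n) (Fin n) ℂ, M = Cᴴ * C := by
    open scoped MatrixOrder in exact CStarAlgebra.nonneg_iff_eq_star_mul_self.mp hM.nonneg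
  rw [Matrix.mul_assoc, Matrix.trace_mul_comm]
  exact psd_trace_re_nonneg (by simpa [Matrix.mul_assoc] using hN.mul_mul_conjTranspose_same C)
lemma sum_rpow_eigenvalues_le {n : ℕ} {S T : Matrix (Fin n) (Fin n) ℂ}
    (hS : S.PosSemidef) (hT : T.PosSemidef) (hle : (T - S).PosSemidef)
    {p : ℝ} (hp : 1 ≤ p) :
    ∑ j, hS.1.eigenvalues j ^ p ≤ ∑ i, hT.1.eigenvalues i ^ p := by
  classical
  set s := hS.1.eigenvalues with hs
  set t := hT.1.eigenvalues with ht
  set V := (hS.1.eigenvectorUnitary : Matrix (Fin n) (Fin n) ℂ) with hV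
  set U := (hT.1.eigenvectorUnitary : Matrix (Fin n) (Fin n) ℂ) with hU
  set M := Uᴴ * V with hMdef
  have hMmem : M ∈ Matrix.unitaryGroup (Fin n) ℂ := by
    rw [hMdef, ← Matrix.star_eq_conjTranspose]
    exact mul_mem (Unitary.star_mem hT.1.eigenvectorUnitary.2) hS.1.eigenvectorUnitary.2
  set P : Fin n → Fin n → ℝ := fun i j => Complex.normSq (M i j) with hP
  have hP0 : ∀ i j, 0 ≤ P i j := fun i j => Complex.normSq_nonneg _
  -- column sums
  have hcol : ∀ j, ∑ i, P i j = 1 := by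
    intro j
    have h1 : (star M * M) = 1 := Matrix.mem_unitaryGroup_iff'.mp hMmem
    have := congrArg (fun N => (N j j).re) h1
    simp only [Matrix.mul_apply, Matrix.star_eq_conjTranspose, Matrix.conjTranspose_apply,
      Matrix.one_apply_eq, Complex.one_re] at this
    rw [← this, Complex.re_sum]
    refine Finset.sum_congr rfl fun i _ => ?_
    simp only [hP, Complex.normSq_apply, Complex.mul_re, Complex.conj_re, Complex.conj_im,
      RCLike.star_def]
    ring
  -- row sums
  have hrow : ∀ i, ∑ j, P i j = 1 := by
    intro i
    have h1 : (M * star M) = 1 := Matrix.mem_unitaryGroup_iff.mp hMmem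
    have := congrArg (fun N => (N i i).re) h1
    simp only [Matrix.mul_apply, Matrix.star_eq_conjTranspose, Matrix.conjTranspose_apply,
      Matrix.one_apply_eq, Complex.one_re] at this
    rw [← this, Complex.re_sum]
    refine Finset.sum_congr rfl fun j _ => ?_
    simp only [hP, Complex.normSq_apply, Complex.mul_re, Complex.conj_re, Complex.conj_im,
      RCLike.star_def]
    ring
  -- diagonal entries of Vᴴ T V
  have hre : ∀ r : ℝ, (RCLike.ofReal r : ℂ).re = r := fun r => rfl
  have him : ∀ r : ℝ, (RCLike.ofReal r : ℂ).im = 0 := fun r => rfl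
  have hTV : ∀ j, ((Vᴴ * T * V) j j).re = ∑ i, t i * P i j := by
    intro j
    have hTs : T = U * Matrix.diagonal (RCLike.ofReal ∘ t) * Uᴴ := by
      simpa [Matrix.star_eq_conjTranspose] using hT.1.spectral_theorem
    have : Vᴴ * T * V = Mᴴ * Matrix.diagonal (RCLike.ofReal ∘ t) * M := by
      rw [hTs, hMdef]
      simp only [Matrix.conjTranspose_mul, Matrix.conjTranspose_conjTranspose]
      noncomm_ring
    rw [this]
    rw [Matrix.mul_apply, Complex.re_sum]
    refine Finset.sum_congr rfl fun i _ => ?_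
    rw [Matrix.mul_apply]
    rw [Finset.sum_eq_single i]
    · simp only [Matrix.diagonal_apply_eq, Matrix.conjTranspose_apply, Function.comp, hP,
        Complex.normSq_apply, RCLike.star_def, Complex.mul_re, Complex.mul_im,
        hre, him, Complex.conj_re, Complex.conj_im]
      ring
    · intro b _ hb
      simp [Matrix.diagonal_apply_ne _ hb]
    · simp
  -- diagonal entries of Vᴴ S V
  have hSV : ∀ j, ((Vᴴ * S * V) j j).re = s j := by
    intro j
    have : Vᴴ * S * V = Matrix.diagonal (RCLike.ofReal ∘ s) := by
      simpa [Matrix.star_eq_conjTranspose] using hS.1.conjStarAlgAut_star_eigenvectorUnitary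
    rw [this]
    simp [Function.comp]
  -- key: s j ≤ ∑ i, t i * P i j
  have hkey : ∀ j, s j ≤ ∑ i, t i * P i j := by
    intro j
    have hpsd : (Vᴴ * (T - S) * V).PosSemidef := hle.conjTranspose_mul_mul_same V
    have h0 := psd_diag_re_nonneg hpsd j
    have hexp : Vᴴ * (T - S) * V = Vᴴ * T * V - Vᴴ * S * V := by noncomm_ring
    rw [hexp] at h0
    simp only [Matrix.sub_apply, Complex.sub_re] at h0
    rw [hTV j, hSV j] at h0
    linarith
  have hs0 : ∀ j, 0 ≤ s j := fun j => hS.eigenvalues_nonneg j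
  have ht0 : ∀ i, 0 ≤ t i := fun i => hT.eigenvalues_nonneg i
  calc ∑ j, s j ^ p
      ≤ ∑ j, (s j ^ p + p * s j ^ (p - 1) * ((∑ i, t i * P i j) - s j)) := by
        refine Finset.sum_le_sum fun j _ => ?_
        have h1 : 0 ≤ p * s j ^ (p - 1) * ((∑ i, t i * P i j) - s j) :=
          mul_nonneg (mul_nonneg (by linarith) (Real.rpow_nonneg (hs0 j) _))
            (sub_nonneg.mpr (hkey j))
        linarith
    _ = ∑ j, ∑ i, P i j * (s j ^ p + p * s j ^ (p - 1) * (t i - s j)) := by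
        refine Finset.sum_congr rfl fun j _ => ?_
        have expand : ∀ i : Fin n, P i j * (s j ^ p + p * s j ^ (p - 1) * (t i - s j))
            = P i j * (s j ^ p - p * s j ^ (p - 1) * s j) + p * s j ^ (p - 1) * (t i * P i j) :=
          fun i => by ring
        rw [Finset.sum_congr rfl fun i _ => expand i, Finset.sum_add_distrib,
          ← Finset.sum_mul, hcol j, ← Finset.mul_sum]
        ring
    _ ≤ ∑ j, ∑ i, P i j * t i ^ p := by
        refine Finset.sum_le_sum fun j _ => Finset.sum_le_sum fun i _ => ?_
        exact mul_le_mul_of_nonneg_left (tangent_rpow (hs0 j) (ht0 i) hp) (hP0 i j)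
    _ = ∑ i, t i ^ p := by
        rw [Finset.sum_comm]
        refine Finset.sum_congr rfl fun i _ => ?_
        rw [← Finset.sum_mul, hrow i, one_mul]

namespace Matrix.PosSemidef

/-- The positive semidefinite square root of a positive semidefinite matrix
(the definition of Mathlib of December 2024, since removed from Mathlib). -/
noncomputable def sqrt {n 𝕜 : Type*} [Fintype n] [RCLike 𝕜] [DecidableEq n] {A : Matrix n n 𝕜}
    (hA : PosSemidef A) : Matrix n n 𝕜 :=
  hA.1.eigenvectorUnitary.1 * diagonal ((↑) ∘ (√·) ∘ hA.1.eigenvalues) *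
  (star hA.1.eigenvectorUnitary : Matrix n n 𝕜)

theorem posSemidef_sqrt {n 𝕜 : Type*} [Fintype n] [RCLike 𝕜] [DecidableEq n] {A : Matrix n n 𝕜}
    (hA : PosSemidef A) : PosSemidef hA.sqrt := by
  unfold sqrt
  apply PosSemidef.mul_mul_conjTranspose_same
  refine posSemidef_diagonal_iff.mpr fun i ↦ ?_
  rw [Function.comp_apply, RCLike.nonneg_iff]
  constructor
  · simp only [Function.comp_apply, RCLike.ofReal_re]; exact Real.sqrt_nonneg _
  · simp only [Function.comp_apply, RCLike.ofReal_im]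

theorem sqrt_mul_self {n 𝕜 : Type*} [Fintype n] [RCLike 𝕜] [DecidableEq n] {A : Matrix n n 𝕜}
    (hA : PosSemidef A) : hA.sqrt * hA.sqrt = A := by
  unfold sqrt
  conv_rhs => rw [hA.1.spectral_theorem, Unitary.conjStarAlgAut_apply]
  simp only [Matrix.mul_assoc]
  rw [← Matrix.mul_assoc (star hA.1.eigenvectorUnitary : Matrix n n 𝕜) _,
    Unitary.coe_star_mul_self, Matrix.one_mul, ← Matrix.mul_assoc (diagonal _) (diagonal _),
    diagonal_mul_diagonal]
  congr 3
  ext i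
  simp only [Function.comp_apply]
  rw [← RCLike.ofReal_mul, Real.mul_self_sqrt (hA.eigenvalues_nonneg i)]

end Matrix.PosSemidef

/-- The absolute value `|A| = (AᴴA)^(1/2)` of a complex matrix `A`. -/
noncomputable def matAbs {n : ℕ} (A : Matrix (Fin n) (Fin n) ℂ) : Matrix (Fin n) (Fin n) ℂ :=
  (Matrix.posSemidef_conjTranspose_mul_self A).sqrt

/-- The Schatten `p`-norm `‖A‖ₚ = (tr |A|^p)^(1/p)`, computed via the eigenvalues of `|A|`. -/
noncomputable def schattenNorm {n : ℕ} (p : ℝ) (A : Matrix (Fin n) (Fin n) ℂ) : ℝ :=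
  (∑ i, ((Matrix.posSemidef_conjTranspose_mul_self A).posSemidef_sqrt.1.eigenvalues i) ^ p) ^ (1 / p)

theorem abs_dominates_abs_implies_trace_and_bj {n : ℕ} (A B : Matrix (Fin n) (Fin n) ℂ)
    (h : ∀ γ : ℂ, (matAbs (B + γ • A) - matAbs B).PosSemidef) :
    (Bᴴ * A).trace = 0 ∧
      ∀ p : ℝ, 1 ≤ p → ∀ γ : ℂ, schattenNorm p B ≤ schattenNorm p (B + γ • A) := by
  have hSpsd : (matAbs B).PosSemidef :=
    (Matrix.posSemidef_conjTranspose_mul_self B).posSemidef_sqrt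
  have hTpsd : ∀ γ : ℂ, (matAbs (B + γ • A)).PosSemidef := fun γ =>
    (Matrix.posSemidef_conjTranspose_mul_self _).posSemidef_sqrt
  constructor
  · -- part (a)
    set c := (Bᴴ * A).trace with hc
    set a := (Aᴴ * A).trace with ha
    -- the basic trace inequality
    have step1 : ∀ γ : ℂ, ((Bᴴ * B).trace).re ≤ (((B + γ • A)ᴴ * (B + γ • A)).trace).re := by
      intro γ
      set S := matAbs B
      set T := matAbs (B + γ • A)
      have hSS : S * S = Bᴴ * B := (Matrix.posSemidef_conjTranspose_mul_self B).sqrt_mul_self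
      have hTT : T * T = (B + γ • A)ᴴ * (B + γ • A) :=
        (Matrix.posSemidef_conjTranspose_mul_self _).sqrt_mul_self
      have hid : T * T - S * S = (T - S) * T + S * (T - S) := by noncomm_ring
      have h1 : 0 ≤ (((T - S) * T).trace).re :=
        psd_trace_mul_re_nonneg (h γ) (hTpsd γ)
      have h2 : 0 ≤ ((S * (T - S)).trace).re :=
        psd_trace_mul_re_nonneg hSpsd (h γ)
      have h3 := congrArg (fun X => (Matrix.trace X).re) hid
      simp only [Matrix.trace_sub, Matrix.trace_add, Complex.sub_re, Complex.add_re] at h3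
      rw [hSS, hTT] at h3
      linarith
    -- expansion of the quadratic
    have quad : ∀ γ : ℂ, 0 ≤ 2 * (γ * c).re + Complex.normSq γ * a.re := by
      intro γ
      have hexp : (B + γ • A)ᴴ * (B + γ • A)
          = Bᴴ * B + γ • (Bᴴ * A) + (star γ) • (Aᴴ * B) + (star γ * γ) • (Aᴴ * A) := by
        simp only [Matrix.conjTranspose_add, Matrix.conjTranspose_smul, Matrix.add_mul,
          Matrix.mul_add, Matrix.smul_mul, Matrix.mul_smul, smul_smul, smul_add]
        module
      have hstar : (Aᴴ * B).trace = star c := by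
        rw [hc, ← Matrix.trace_conjTranspose, Matrix.conjTranspose_mul,
          Matrix.conjTranspose_conjTranspose]
      have h4 := step1 γ
      rw [hexp] at h4
      simp only [Matrix.trace_add, Matrix.trace_smul, hstar, Complex.add_re, smul_eq_mul] at h4
      have e1 : (star γ * star c).re = (γ * c).re := by
        simp only [Complex.star_def, Complex.mul_re, Complex.conj_re, Complex.conj_im]
        ring
      have e2 : (star γ * γ * a).re = Complex.normSq γ * a.re := by
        rw [mul_comm (star γ) γ, Complex.star_def, Complex.mul_conj]
        simp [Complex.mul_re]
      rw [e1, e2] at h4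
      linarith
    -- choose γ
    have hare : 0 ≤ a.re := psd_trace_re_nonneg (Matrix.posSemidef_conjTranspose_mul_self A)
    set K := Complex.normSq c with hK
    have hK0 : 0 ≤ K := Complex.normSq_nonneg c
    set t : ℝ := 1 / (a.re + 1) with htdef
    have ht : 0 < t := by positivity
    have hta : t * a.re ≤ 1 := by
      rw [htdef]
      rw [div_mul_eq_mul_div, div_le_one (by linarith)]
      linarith
    have hγ := quad (-(t : ℂ) * (starRingEnd ℂ c))
    have e3 : ((-(t : ℂ) * (starRingEnd ℂ c)) * c).re = -t * K := by
      rw [mul_assoc, mul_comm (starRingEnd ℂ c) c, Complex.mul_conj]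
      simp [hK]
    have e4 : Complex.normSq (-(t : ℂ) * (starRingEnd ℂ c)) = t * t * K := by
      rw [Complex.normSq_mul, Complex.normSq_neg, Complex.normSq_conj, Complex.normSq_ofReal]
    rw [e3, e4] at hγ
    have h5 : 0 ≤ t * K * (1 - t * a.re) :=
      mul_nonneg (mul_nonneg ht.le hK0) (sub_nonneg.mpr hta)
    have h6 : K ≤ 0 := by nlinarith
    have hKzero : K = 0 := le_antisymm h6 hK0
    exact Complex.normSq_eq_zero.mp hKzero
  · -- part (b)
    intro p hp γ
    have hsum := sum_rpow_eigenvalues_le hSpsd (hTpsd γ) (h γ) hp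
    have h0 : 0 ≤ ∑ j, ((Matrix.posSemidef_conjTranspose_mul_self B).posSemidef_sqrt.1.eigenvalues j) ^ p :=
      Finset.sum_nonneg fun j _ => Real.rpow_nonneg
        ((Matrix.posSemidef_conjTranspose_mul_self B).posSemidef_sqrt.eigenvalues_nonneg j) p
    exact Real.rpow_le_rpow h0 hsum (by positivity)
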